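/- Let G be a finite group, n ≥ 1, and H : Fin (n+1) → Subgroup G a strictly monotone family of subgroups with H 0 = ⊥ and H n = ⊤, and suppose there is a function k : Fin (n+1) → ℕ such that |H i| = |H 1|^(k i) for every i (so k 0 = 0 and k 1 = 1), with H 1 ≠ ⊥. Then there exists a bijection φ : G → (Fin (k n) → H 1) such that for all x, y ∈ G the chain distance equals the block Rosenbloom–Tsfasman distance: d_C(x, y) = d_BRT(φ(x), φ(y)), where d_BRT is taken with respect to the partition of the k n coordinates into the n consecutive blocks {k(i−1), …, k(i) − 1} for i = 1, …, n; i.e. (G, d_C) is isometric to ((H 1)^(k n), d_BRT). -/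

import Mathlib

/-- The chain weight of `x` with respect to a chain of subgroups
`H : Fin (n+1) → Subgroup G`: the least index `i` with `x ∈ H i`. -/
noncomputable def chainWeight {G : Type*} [Group G] {n : ℕ}
    (H : Fin (n + 1) → Subgroup G) (x : G) : ℕ :=
  sInf {i : ℕ | ∃ hi : i < n + 1, x ∈ H ⟨i, hi⟩}

/-- The chain distance associated to a chain of subgroups:
`d_C(x, y) = w_C(x * y⁻¹)`. -/
noncomputable def chainDist {G : Type*} [Group G] {n : ℕ}
    (H : Fin (n + 1) → Subgroup G) (x y : G) : ℕ :=
  chainWeight H (x * y⁻¹)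

/-- The block Rosenbloom–Tsfasman distance on `Fin N → A`, with respect to the
partition of the coordinates `{0, …, N-1}` into the consecutive blocks
`B_i = {k (i-1), …, k i - 1}` for `i = 1, …, n`: it is `0` if the tuples are
equal, and otherwise the largest block index `i` such that the tuples differ
at some coordinate of block `B_i`. -/
noncomputable def brtDist {A : Type*} {n N : ℕ} (k : Fin (n + 1) → ℕ)
    (a b : Fin N → A) : ℕ :=
  sSup {m : ℕ | ∃ i : Fin (n + 1), (i : ℕ) = m ∧ i ≠ 0 ∧
    ∃ j : Fin N, a j ≠ b j ∧ k (i - 1) ≤ (j : ℕ) ∧ (j : ℕ) < k i}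


open QuotientGroup in
private lemma exists_code {G : Type*} [Group G] [Fintype G]
    (H₀ H₁ : Subgroup G) (hle : H₀ ≤ H₁) (A : Type*) [Fintype A]
    (hA : Nat.card H₁ ≤ Nat.card H₀ * Nat.card A) :
    ∃ c : G → A, ∀ u v : G, u⁻¹ * v ∈ H₁ → (c u = c v ↔ u⁻¹ * v ∈ H₀) := by
  classical
  have hcard : Nat.card H₁ = Nat.card (H₁ ⧸ H₀.subgroupOf H₁) * Nat.card H₀ := by
    rw [Subgroup.card_eq_card_quotient_mul_card_subgroup (H₀.subgroupOf H₁)]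
    congr 1
    exact Nat.card_congr (Subgroup.subgroupOfEquivOfLe hle).toEquiv
  have hQ : Nat.card (H₁ ⧸ H₀.subgroupOf H₁) ≤ Nat.card A := by
    have h0 : 0 < Nat.card H₀ := Nat.card_pos
    rw [hcard, mul_comm (Nat.card H₀)] at hA
    exact Nat.le_of_mul_le_mul_right hA h0
  have : Fintype (H₁ ⧸ H₀.subgroupOf H₁) := Fintype.ofFinite _
  obtain ⟨ι⟩ : Nonempty ((H₁ ⧸ H₀.subgroupOf H₁) ↪ A) := by
    apply Function.Embedding.nonempty_of_card_le
    simpa [← Nat.card_eq_fintype_card] using hQ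
  set e := Subgroup.quotientEquivProdOfLE hle with he
  refine ⟨fun g => ι ((e (QuotientGroup.mk g)).2), fun u v huv => ?_⟩
  have h1 : ∀ g : G, (e (QuotientGroup.mk g)).1 = (QuotientGroup.mk g : G ⧸ H₁) := fun g => rfl
  have hfst : (e (QuotientGroup.mk u)).1 = (e (QuotientGroup.mk v)).1 := by
    rw [h1, h1]
    exact (QuotientGroup.eq).mpr huv
  constructor
  · intro h
    have h2 : (e (QuotientGroup.mk u)).2 = (e (QuotientGroup.mk v)).2 := ι.injective h
    have : e (QuotientGroup.mk u) = e (QuotientGroup.mk v) := Prod.ext hfst h2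
    have := e.injective this
    exact (QuotientGroup.eq).mp this
  · intro h
    have h3 : (QuotientGroup.mk u : G ⧸ H₀) = QuotientGroup.mk v := (QuotientGroup.eq).mpr h
    show ι (e (QuotientGroup.mk u)).2 = ι (e (QuotientGroup.mk v)).2
    rw [h3]

private lemma exists_F {G : Type*} [Group G] [Fintype G] {n : ℕ}
    (H : Fin (n + 1) → Subgroup G) (htop : H (Fin.last n) = ⊤)
    (k : Fin (n + 1) → ℕ)
    (hk : ∀ i, Nat.card (H i) = Nat.card (H 1) ^ k i)
    (hkmono : Monotone k) (hHmono : Monotone H) :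
    ∀ m, m ≤ n → ∃ F : G → (Fin (k (Fin.last n)) → (H 1)),
      ∀ (i : ℕ) (hi : i < n + 1), m ≤ i → ∀ u v : G,
        (u⁻¹ * v ∈ H ⟨i, hi⟩ ↔
          ∀ j : Fin (k (Fin.last n)), k ⟨i, hi⟩ ≤ (j : ℕ) → F u j = F v j) := by
  classical
  suffices h : ∀ d m, m ≤ n → n - m ≤ d → ∃ F : G → (Fin (k (Fin.last n)) → (H 1)),
      ∀ (i : ℕ) (hi : i < n + 1), m ≤ i → ∀ u v : G,
        (u⁻¹ * v ∈ H ⟨i, hi⟩ ↔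
          ∀ j : Fin (k (Fin.last n)), k ⟨i, hi⟩ ≤ (j : ℕ) → F u j = F v j) by
    intro m hm; exact h (n - m) m hm le_rfl
  intro d
  induction d with
  | zero =>
    intro m hm hd
    have hmn : m = n := by omega
    refine ⟨fun _ _ => 1, fun i hi hmi u v => ?_⟩
    have hin : (⟨i, hi⟩ : Fin (n + 1)) = Fin.last n := by
      ext; simp [Fin.last]; omega
    rw [hin, htop]
    simp
  | succ d ih =>
    intro m hm hd
    rcases eq_or_lt_of_le hm with hmn | hmn
    · exact ih m hm (by omega)
    · -- m < n : recursive step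
      obtain ⟨F, hF⟩ := ih (m + 1) (by omega) (by omega)
      have hmlt : m < n + 1 := by omega
      have hm1lt : m + 1 < n + 1 := by omega
      have hkmle : k ⟨m, hmlt⟩ ≤ k ⟨m + 1, hm1lt⟩ := hkmono (by simp [Fin.mk_le_mk])
      have hkm1K : k ⟨m + 1, hm1lt⟩ ≤ k (Fin.last n) := by
        apply hkmono
        simp only [Fin.le_def, Fin.last]
        omega
      have hle : H ⟨m, hmlt⟩ ≤ H ⟨m + 1, hm1lt⟩ := hHmono (by simp [Fin.mk_le_mk])
      obtain ⟨c, hc⟩ := exists_code (H ⟨m, hmlt⟩) (H ⟨m + 1, hm1lt⟩) hle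
          (Fin (k ⟨m + 1, hm1lt⟩ - k ⟨m, hmlt⟩) → (H 1)) (by
            have e3 : Nat.card (Fin (k ⟨m + 1, hm1lt⟩ - k ⟨m, hmlt⟩) → (H 1))
                = Nat.card (H 1) ^ (k ⟨m + 1, hm1lt⟩ - k ⟨m, hmlt⟩) := by
              rw [Nat.card_fun]
              congr 1
              simp [Nat.card_eq_fintype_card]
            rw [hk ⟨m + 1, hm1lt⟩, hk ⟨m, hmlt⟩, e3, ← pow_add]
            exact le_of_eq (by congr 1; omega))
      set F' : G → Fin (k (Fin.last n)) → (H 1) := fun u j =>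
        if h1 : (j : ℕ) < k ⟨m, hmlt⟩ then 1
        else if h2 : (j : ℕ) < k ⟨m + 1, hm1lt⟩ then c u ⟨(j : ℕ) - k ⟨m, hmlt⟩, by omega⟩
        else F u j with hF'def
      have hhigh : ∀ (u : G) (j : Fin (k (Fin.last n))), k ⟨m + 1, hm1lt⟩ ≤ (j : ℕ) →
          F' u j = F u j := by
        intro u j hj
        have ha : ¬ ((j : ℕ) < k ⟨m, hmlt⟩) := by omega
        have hb : ¬ ((j : ℕ) < k ⟨m + 1, hm1lt⟩) := by omega
        simp only [hF'def]
        rw [dif_neg ha, dif_neg hb]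
      refine ⟨F', ?_⟩
      intro i hi hmi u v
      rcases eq_or_lt_of_le hmi with hieq | hilt
      · -- i = m
        have hieq' : (⟨i, hi⟩ : Fin (n + 1)) = ⟨m, hmlt⟩ := by
          apply Fin.ext
          simp
          omega
        rw [hieq']
        constructor
        · intro h
          have h1 : u⁻¹ * v ∈ H ⟨m + 1, hm1lt⟩ := hle h
          have hcuv : c u = c v := (hc u v h1).mpr h
          have hFeq := (hF (m + 1) hm1lt le_rfl u v).mp h1
          intro j hj
          by_cases h2 : (j : ℕ) < k ⟨m + 1, hm1lt⟩
          · show F' u j = F' v j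
            have ha : ¬ ((j : ℕ) < k ⟨m, hmlt⟩) := by omega
            simp only [hF'def]
            rw [dif_neg ha, dif_neg ha, dif_pos h2, dif_pos h2, hcuv]
          · show F' u j = F' v j
            rw [hhigh u j (by omega), hhigh v j (by omega)]
            exact hFeq j (by omega)
        · intro h
          have h1 : u⁻¹ * v ∈ H ⟨m + 1, hm1lt⟩ := by
            apply (hF (m + 1) hm1lt le_rfl u v).mpr
            intro j hj
            have := h j (by omega)
            rwa [hhigh u j hj, hhigh v j hj] at this
          apply (hc u v h1).mp
          funext j'
          have hj'K : k ⟨m, hmlt⟩ + (j' : ℕ) < k (Fin.last n) := by omega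
          have hag := h ⟨k ⟨m, hmlt⟩ + (j' : ℕ), hj'K⟩ (by simp)
          have hnk : ¬ (k ⟨m, hmlt⟩ + (j' : ℕ) < k ⟨m, hmlt⟩) := by omega
          have h2 : k ⟨m, hmlt⟩ + (j' : ℕ) < k ⟨m + 1, hm1lt⟩ := by omega
          simp only [hF'def] at hag
          rw [dif_neg hnk, dif_neg hnk, dif_pos h2, dif_pos h2] at hag
          convert hag using 2 <;> · apply Fin.ext; simp
      · -- m + 1 ≤ i
        have hk1i : k ⟨m + 1, hm1lt⟩ ≤ k ⟨i, hi⟩ := by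
          apply hkmono
          simp only [Fin.mk_le_mk]
          omega
        have heqv : (∀ j : Fin (k (Fin.last n)), k ⟨i, hi⟩ ≤ (j : ℕ) → F' u j = F' v j) ↔
            (∀ j : Fin (k (Fin.last n)), k ⟨i, hi⟩ ≤ (j : ℕ) → F u j = F v j) := by
          apply forall_congr'
          intro j
          apply imp_congr_right
          intro hj
          rw [hhigh u j (by omega), hhigh v j (by omega)]
        rw [heqv]
        exact hF i hi (by omega) u v

/-- Let `G` be a finite group with a strictly increasing chain of
subgroups `⊥ = H 0 < H 1 < ⋯ < H n = ⊤` such that `|H i| = |H 1|^(k i)` for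
some `k : Fin (n+1) → ℕ` (so `k 0 = 0`, `k 1 = 1`), with `H 1 ≠ ⊥`. Then
`(G, d_C)` is isometric to `(H 1)^(k n)` with the block Rosenbloom–Tsfasman
distance whose blocks are `{k (i-1), …, k i - 1}` for `i = 1, …, n`. -/
theorem stmt_19 {G : Type*} [Group G] [Fintype G] (n : ℕ) (hn : 1 ≤ n)
    (H : Fin (n + 1) → Subgroup G) (hmono : StrictMono H)
    (hbot : H 0 = ⊥) (htop : H (Fin.last n) = ⊤)
    (k : Fin (n + 1) → ℕ)
    (hk : ∀ i : Fin (n + 1), Nat.card (H i) = Nat.card (H 1) ^ k i)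
    (hne : H 1 ≠ ⊥) :
    ∃ φ : G ≃ (Fin (k (Fin.last n)) → (H 1)),
      ∀ x y : G, chainDist H x y = brtDist k (φ x) (φ y) := by
  classical
  have hq1 : 1 ≤ Nat.card (H 1) := Nat.card_pos
  have hqne : Nat.card (H 1) ≠ 1 := fun h => hne (Subgroup.card_eq_one.mp h)
  have hq2 : 2 ≤ Nat.card (H 1) := by omega
  have hkmono : Monotone k := by
    intro a b hab
    have h1 : Nat.card (H a) ≤ Nat.card (H b) := Subgroup.card_le_of_le (hmono.monotone hab)
    rw [hk a, hk b] at h1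
    exact (Nat.pow_le_pow_iff_right (by omega)).mp h1
  have hzero : (⟨0, Nat.succ_pos n⟩ : Fin (n + 1)) = 0 := by apply Fin.ext; simp
  have hk0 : k 0 = 0 := by
    have h := hk 0
    rw [hbot, Subgroup.card_bot] at h
    by_contra h0
    have h2 : Nat.card (H 1) ≤ Nat.card (H 1) ^ k 0 := Nat.le_self_pow h0 _
    omega
  obtain ⟨F, hF⟩ := exists_F H htop k hk hkmono hmono.monotone 0 (Nat.zero_le n)
  have hinj : Function.Injective F := by
    intro u v huv
    have h := (hF 0 (Nat.succ_pos n) (Nat.zero_le 0) u v).mpr (fun j _ => by rw [huv])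
    rw [hzero, hbot, Subgroup.mem_bot] at h
    exact inv_mul_eq_one.mp h
  have hcard : Nat.card G = Nat.card (Fin (k (Fin.last n)) → (H 1)) := by
    rw [Nat.card_fun]
    have h := hk (Fin.last n)
    rw [htop, Subgroup.card_top] at h
    rw [h]
    congr 1
    simp [Nat.card_eq_fintype_card]
  have hbij : Function.Bijective F := (Nat.bijective_iff_injective_and_card F).mpr ⟨hinj, hcard⟩
  refine ⟨(Equiv.inv G).trans (Equiv.ofBijective F hbij), ?_⟩
  intro x y
  have KEY : ∀ (i : ℕ) (hi : i < n + 1),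
      (x * y⁻¹ ∈ H ⟨i, hi⟩ ↔
        ∀ j : Fin (k (Fin.last n)), k ⟨i, hi⟩ ≤ (j : ℕ) → F x⁻¹ j = F y⁻¹ j) := by
    intro i hi
    have h := hF i hi (Nat.zero_le i) x⁻¹ y⁻¹
    rwa [inv_inv] at h
  show chainDist H x y = brtDist k (F x⁻¹) (F y⁻¹)
  set S : Set ℕ := {i : ℕ | ∃ hi : i < n + 1, x * y⁻¹ ∈ H ⟨i, hi⟩} with hSdef
  set T : Set ℕ := {m : ℕ | ∃ i : Fin (n + 1), (i : ℕ) = m ∧ i ≠ 0 ∧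
    ∃ j : Fin (k (Fin.last n)), F x⁻¹ j ≠ F y⁻¹ j ∧ k (i - 1) ≤ (j : ℕ) ∧ (j : ℕ) < k i}
    with hTdef
  show sInf S = sSup T
  have hnS : n ∈ S := ⟨Nat.lt_succ_self n, by
    rw [show (⟨n, Nat.lt_succ_self n⟩ : Fin (n + 1)) = Fin.last n from rfl, htop]; trivial⟩
  by_cases hxy : x = y
  · have h0S : 0 ∈ S := ⟨Nat.succ_pos n, by rw [hzero, hbot, hxy]; simp⟩
    have hTe : T = ∅ := by
      rw [hTdef]
      ext m
      simp only [Set.mem_setOf_eq, Set.mem_empty_iff_false, iff_false]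
      rintro ⟨i, rfl, hi0, j, hj, -⟩
      exact hj (by rw [hxy])
    rw [Nat.sInf_eq_zero.mpr (Or.inl h0S), hTe]
    simp
  · have hSne : S.Nonempty := ⟨n, hnS⟩
    obtain ⟨hwlt, hwmem⟩ := Nat.sInf_mem hSne
    have hwn : sInf S ≤ n := Nat.sInf_le hnS
    have hw1 : 1 ≤ sInf S := by
      by_contra h
      have h0 : sInf S = 0 := by omega
      have hfin : (⟨sInf S, hwlt⟩ : Fin (n + 1)) = 0 := by apply Fin.ext; simpa using h0
      rw [hfin, hbot, Subgroup.mem_bot] at hwmem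
      exact hxy (mul_inv_eq_one.mp hwmem)
    have hw1lt : sInf S - 1 < n + 1 := by omega
    have hstep : ¬ (sInf S - 1 ∈ S) := Nat.notMem_of_lt_sInf (by omega)
    have hnotmem : ¬ (x * y⁻¹ ∈ H ⟨sInf S - 1, hw1lt⟩) := fun hmem => hstep ⟨hw1lt, hmem⟩
    have hnag : ¬ ∀ j : Fin (k (Fin.last n)), k ⟨sInf S - 1, hw1lt⟩ ≤ (j : ℕ) →
        F x⁻¹ j = F y⁻¹ j := fun hag => hnotmem ((KEY _ hw1lt).mpr hag)
    push_neg at hnag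
    obtain ⟨j, hj1, hj2⟩ := hnag
    have hag : ∀ j : Fin (k (Fin.last n)), k ⟨sInf S, hwlt⟩ ≤ (j : ℕ) → F x⁻¹ j = F y⁻¹ j :=
      (KEY _ hwlt).mp hwmem
    have hjlt : (j : ℕ) < k ⟨sInf S, hwlt⟩ := by
      by_contra h75
      exact hj2 (hag j (not_lt.mp h75))
    have hine0 : (⟨sInf S, hwlt⟩ : Fin (n + 1)) ≠ 0 :=
      Fin.ne_of_val_ne (by simpa using (by omega : sInf S ≠ 0))
    have hiw : ((⟨sInf S, hwlt⟩ : Fin (n + 1)) - 1 : Fin (n + 1)) = ⟨sInf S - 1, hw1lt⟩ := by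
      apply Fin.ext
      rw [Fin.coe_sub_one, if_neg hine0]
    have hwT : sInf S ∈ T := ⟨⟨sInf S, hwlt⟩, rfl, hine0, j, hj2, by rw [hiw]; exact hj1, hjlt⟩
    have hub : ∀ m ∈ T, m ≤ sInf S := by
      rintro m ⟨i, rfl, hi0, j', hj'ne, hj'1, hj'2⟩
      by_contra hcon
      push_neg at hcon
      have hile : (i : ℕ) - 1 < n + 1 := by omega
      have hi1 : (i - 1 : Fin (n + 1)) = ⟨(i : ℕ) - 1, hile⟩ := by
        apply Fin.ext
        rw [Fin.coe_sub_one, if_neg hi0]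
      have hival : 1 ≤ (i : ℕ) := by
        have : (i : ℕ) ≠ 0 := by intro h; exact hi0 (Fin.ext (by rw [h]; simp))
        omega
      have hmem2 : x * y⁻¹ ∈ H ⟨(i : ℕ) - 1, hile⟩ := by
        apply hmono.monotone _ hwmem
        simp only [Fin.mk_le_mk]
        omega
      rw [hi1] at hj'1
      exact hj'ne ((KEY ((i : ℕ) - 1) hile).mp hmem2 j' hj'1)
    exact le_antisymm (le_csSup ⟨sInf S, hub⟩ hwT) (csSup_le ⟨sInf S, hwT⟩ hub)
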